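/- Let A and B be finite types and let ρ be a density matrix on A × B. The following are equivalent: (i) there exist unitary matrices U_A : Matrix A A ℂ and U_B : Matrix B B ℂ such that U_A† ρ_A U_A and U_B† ρ_B U_B are diagonal (i.e., the columns of U_A and U_B are eigenbases of the reduced states) and C((U_A ⊗ U_B)† ρ (U_A ⊗ U_B)) = 0; (ii) there exist orthonormal families of vectors α : A → (A → ℂ) and β : B → (B → ℂ) and non-negative reals p : A × B → ℝ with ∑_{(i,j)} p (i,j) = 1 such that ρ = ∑_{(i,j)} p (i,j) · (α_i α_i†) ⊗ (β_j β_j†). That is, a state has zero correlated coherence with respect to the local eigenbases exactly when it has zero symmetric quantum discord. -/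

import Mathlib

open Matrix
open scoped Kronecker ComplexOrder

lemma kron_ct {A B : Type} [Fintype A] [Fintype B] (UA : Matrix A A ℂ) (UB : Matrix B B ℂ) :
    (UA ⊗ₖ UB)ᴴ = UAᴴ ⊗ₖ UBᴴ := by
  ext x y
  simp [conjTranspose_apply, kroneckerMap_apply, star_mul', mul_comm]

lemma key {A B : Type} [Fintype A] [DecidableEq A] [Fintype B] [DecidableEq B]
    (UA : Matrix A A ℂ) (UB : Matrix B B ℂ) (d : A × B → ℂ) :
    (UA ⊗ₖ UB) * Matrix.diagonal d * (UA ⊗ₖ UB)ᴴ =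
    ∑ ij : A × B, d ij •
      ((Matrix.of fun x y : A => UA x ij.1 * star (UA y ij.1)) ⊗ₖ
        (Matrix.of fun x y : B => UB x ij.2 * star (UB y ij.2))) := by
  ext x y
  simp only [Matrix.mul_apply, Matrix.mul_diagonal, Matrix.conjTranspose_apply,
    Matrix.sum_apply, Matrix.smul_apply, Matrix.kroneckerMap_apply, Matrix.of_apply,
    smul_eq_mul]
  refine Finset.sum_congr rfl fun k _ => ?_
  simp [Matrix.diagonal_apply, mul_ite, mul_zero, star_mul']
  ring

lemma key1 {ι : Type} [Fintype ι] [DecidableEq ι] (U : Matrix ι ι ℂ) (d : ι → ℂ) :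
    U * Matrix.diagonal d * Uᴴ =
      Matrix.of fun x y => ∑ i, d i * (U x i * star (U y i)) := by
  ext x y
  simp only [Matrix.mul_apply, Matrix.conjTranspose_apply, Matrix.of_apply]
  refine Finset.sum_congr rfl fun k _ => ?_
  simp [Matrix.diagonal_apply, mul_ite, mul_zero]
  ring

lemma sandwich {ι : Type} [Fintype ι] [DecidableEq ι] (U D : Matrix ι ι ℂ)
    (h : Uᴴ * U = 1) : Uᴴ * (U * D * Uᴴ) * U = D := by
  have h2 : Uᴴ * (U * D * Uᴴ) * U = (Uᴴ * U) * D * (Uᴴ * U) := by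
    simp only [Matrix.mul_assoc]
  rw [h2, h, Matrix.one_mul, Matrix.mul_one]

/-- The `l₁`-coherence of a matrix with respect to the standard basis:
the sum of the absolute values of all off-diagonal entries. -/
noncomputable def coh {ι : Type} [Fintype ι] [DecidableEq ι] (M : Matrix ι ι ℂ) : ℝ :=
  ∑ i, ∑ j, if i ≠ j then ‖M i j‖ else 0

lemma coh_diagonal {ι : Type} [Fintype ι] [DecidableEq ι] (d : ι → ℂ) :
    coh (Matrix.diagonal d) = 0 := by
  refine Finset.sum_eq_zero fun i _ => Finset.sum_eq_zero fun j _ => ?_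
  by_cases h : i = j
  · simp [h]
  · simp [h, Matrix.diagonal_apply_ne _ h]

/-- A bipartite state has zero correlated coherence with respect to the local
eigenbases of its reduced states if and only if it has zero symmetric quantum
discord, i.e. it is a mixture of products of orthonormal local basis states. -/
theorem stmt_4 {A B : Type} [Fintype A] [DecidableEq A] [Fintype B] [DecidableEq B]
    (ρ : Matrix (A × B) (A × B) ℂ) (hρ : ρ.PosSemidef) (htr : ρ.trace = 1) :
    (∃ (UA : Matrix A A ℂ) (UB : Matrix B B ℂ),
      UA ∈ Matrix.unitaryGroup A ℂ ∧ UB ∈ Matrix.unitaryGroup B ℂ ∧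
      (UAᴴ * (Matrix.of fun i k : A => ∑ j : B, ρ (i, j) (k, j)) * UA).IsDiag ∧
      (UBᴴ * (Matrix.of fun j l : B => ∑ i : A, ρ (i, j) (i, l)) * UB).IsDiag ∧
      coh ((UA ⊗ₖ UB)ᴴ * ρ * (UA ⊗ₖ UB)) = 0) ↔
    (∃ (α : A → A → ℂ) (β : B → B → ℂ) (p : A × B → ℝ),
      (∀ i i', ∑ x, star (α i x) * α i' x = if i = i' then 1 else 0) ∧
      (∀ j j', ∑ x, star (β j x) * β j' x = if j = j' then 1 else 0) ∧
      (∀ ij, 0 ≤ p ij) ∧ (∑ ij, p ij) = 1 ∧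
      ρ = ∑ ij : A × B, (p ij : ℂ) •
        ((Matrix.of fun x y : A => α ij.1 x * star (α ij.1 y)) ⊗ₖ
          (Matrix.of fun x y : B => β ij.2 x * star (β ij.2 y)))) := by
  constructor
  · rintro ⟨UA, UB, hUA, hUB, -, -, hcoh⟩
    set U := UA ⊗ₖ UB with hUdef
    have hA1 : UA * UAᴴ = 1 := by
      have := (Matrix.mem_unitaryGroup_iff).mp hUA
      simpa [Matrix.star_eq_conjTranspose] using this
    have hA2 : UAᴴ * UA = 1 := by
      have := (Matrix.mem_unitaryGroup_iff').mp hUA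
      simpa [Matrix.star_eq_conjTranspose] using this
    have hB1 : UB * UBᴴ = 1 := by
      have := (Matrix.mem_unitaryGroup_iff).mp hUB
      simpa [Matrix.star_eq_conjTranspose] using this
    have hB2 : UBᴴ * UB = 1 := by
      have := (Matrix.mem_unitaryGroup_iff').mp hUB
      simpa [Matrix.star_eq_conjTranspose] using this
    have hU1 : U * Uᴴ = 1 := by
      rw [hUdef, kron_ct, ← Matrix.mul_kronecker_mul, hA1, hB1, Matrix.one_kronecker_one]
    have hU2 : Uᴴ * U = 1 := by
      rw [hUdef, kron_ct, ← Matrix.mul_kronecker_mul, hA2, hB2, Matrix.one_kronecker_one]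
    set σ := Uᴴ * ρ * U with hσdef
    have hσpsd : σ.PosSemidef := hρ.conjTranspose_mul_mul_same U
    have hdge : ∀ k, (0:ℂ) ≤ σ k k := by
      intro k
      exact hσpsd.diag_nonneg
    have hcoh' : (∑ i, ∑ j, if i ≠ j then ‖σ i j‖ else 0) = 0 := hcoh
    have hoff : ∀ i j, i ≠ j → σ i j = 0 := by
      intro i j hij
      have hterm : ∀ i j : A × B, (0:ℝ) ≤ if i ≠ j then ‖σ i j‖ else 0 := by
        intro i j; split <;> positivity
      have h1 := (Finset.sum_eq_zero_iff_of_nonneg (fun i _ => Finset.sum_nonneg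
        (fun j _ => hterm i j))).mp hcoh' i (Finset.mem_univ i)
      have h2 := (Finset.sum_eq_zero_iff_of_nonneg (fun j _ => hterm i j)).mp
        h1 j (Finset.mem_univ j)
      rw [if_pos hij] at h2
      exact norm_eq_zero.mp h2
    have hdiag : σ = Matrix.diagonal (fun k => σ k k) := by
      ext i j
      by_cases h : i = j
      · subst h; simp
      · simp [Matrix.diagonal_apply_ne _ h, hoff i j h]
    set p : A × B → ℝ := fun k => (σ k k).re with hpdef
    have hpre : ∀ k, ((p k : ℝ) : ℂ) = σ k k := by
      intro k
      have h := (Complex.le_def.mp (hdge k)).2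
      exact (Complex.ext rfl (by simpa using h))
    have hρeq : ρ = U * Matrix.diagonal (fun k => σ k k) * Uᴴ := by
      rw [← hdiag, hσdef]
      have h2 : U * (Uᴴ * ρ * U) * Uᴴ = (U * Uᴴ) * ρ * (U * Uᴴ) := by
        simp only [Matrix.mul_assoc]
      rw [h2, hU1, Matrix.one_mul, Matrix.mul_one]
    have htrσ : σ.trace = 1 := by
      rw [hσdef, Matrix.trace_mul_comm, ← Matrix.mul_assoc, hU1, Matrix.one_mul, htr]
    refine ⟨fun i x => UA x i, fun j x => UB x j, p, ?_, ?_, fun k => (Complex.le_def.mp (hdge k)).1, ?_, ?_⟩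
    · intro i i'
      have := congrFun (congrFun hA2 i) i'
      simpa [Matrix.mul_apply, Matrix.conjTranspose_apply, Matrix.one_apply] using this
    · intro j j'
      have := congrFun (congrFun hB2 j) j'
      simpa [Matrix.mul_apply, Matrix.conjTranspose_apply, Matrix.one_apply] using this
    · have h1 : ((∑ k, p k : ℝ) : ℂ) = 1 := by
        push_cast
        rw [Finset.sum_congr rfl fun k _ => hpre k]
        exact htrσ
      exact_mod_cast h1
    · rw [hρeq, hUdef, key]
      refine Finset.sum_congr rfl fun ij _ => ?_
      rw [hpre ij]
  · rintro ⟨α, β, p, hα, hβ, hp0, hp1, hρeq⟩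
    set UA : Matrix A A ℂ := Matrix.of fun x i => α i x with hUAdef
    set UB : Matrix B B ℂ := Matrix.of fun x i => β i x with hUBdef
    have hA2 : UAᴴ * UA = 1 := by
      ext i i'
      simpa [Matrix.mul_apply, Matrix.conjTranspose_apply, Matrix.one_apply, hUAdef]
        using hα i i'
    have hB2 : UBᴴ * UB = 1 := by
      ext j j'
      simpa [Matrix.mul_apply, Matrix.conjTranspose_apply, Matrix.one_apply, hUBdef]
        using hβ j j'
    have hUAmem : UA ∈ Matrix.unitaryGroup A ℂ := by
      rw [Matrix.mem_unitaryGroup_iff']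
      simpa [Matrix.star_eq_conjTranspose] using hA2
    have hUBmem : UB ∈ Matrix.unitaryGroup B ℂ := by
      rw [Matrix.mem_unitaryGroup_iff']
      simpa [Matrix.star_eq_conjTranspose] using hB2
    have hU2 : (UA ⊗ₖ UB)ᴴ * (UA ⊗ₖ UB) = 1 := by
      rw [kron_ct, ← Matrix.mul_kronecker_mul, hA2, hB2, Matrix.one_kronecker_one]
    have hρd : ρ = (UA ⊗ₖ UB) * Matrix.diagonal (fun ij => (p ij : ℂ)) * (UA ⊗ₖ UB)ᴴ := by
      rw [key]
      exact hρeq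
    have hβ1 : ∀ b, (∑ j, β b j * star (β b j)) = 1 := by
      intro b
      have := hβ b b
      simp only [if_true, eq_self_iff_true] at this
      rw [← this]
      exact Finset.sum_congr rfl fun j _ => mul_comm _ _
    have hα1 : ∀ a, (∑ i, α a i * star (α a i)) = 1 := by
      intro a
      have := hα a a
      simp only [if_true, eq_self_iff_true] at this
      rw [← this]
      exact Finset.sum_congr rfl fun i _ => mul_comm _ _
    have hρA : (Matrix.of fun i k : A => ∑ j : B, ρ (i, j) (k, j)) =
        UA * Matrix.diagonal (fun a => ∑ b, (p (a, b) : ℂ)) * UAᴴ := by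
      rw [key1]
      ext i k
      simp only [Matrix.of_apply]
      calc ∑ j, ρ (i, j) (k, j)
          = ∑ j, ∑ ab : A × B, (p ab : ℂ) *
              ((α ab.1 i * star (α ab.1 k)) * (β ab.2 j * star (β ab.2 j))) := by
            refine Finset.sum_congr rfl fun j _ => ?_
            rw [hρeq]
            simp only [Matrix.sum_apply, Matrix.smul_apply, Matrix.kroneckerMap_apply,
              Matrix.of_apply, smul_eq_mul]
        _ = ∑ ab : A × B, (p ab : ℂ) * (α ab.1 i * star (α ab.1 k)) := by
            rw [Finset.sum_comm]
            refine Finset.sum_congr rfl fun ab _ => ?_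
            rw [← Finset.mul_sum, ← Finset.mul_sum, hβ1 ab.2, mul_one]
        _ = ∑ a : A, (∑ b, (p (a, b) : ℂ)) * (α a i * star (α a k)) := by
            rw [Fintype.sum_prod_type]
            refine Finset.sum_congr rfl fun a _ => ?_
            rw [Finset.sum_mul]
        _ = ∑ a : A, (∑ b, (p (a, b) : ℂ)) * (UA i a * star (UA k a)) := rfl
    have hρB : (Matrix.of fun j l : B => ∑ i : A, ρ (i, j) (i, l)) =
        UB * Matrix.diagonal (fun b => ∑ a, (p (a, b) : ℂ)) * UBᴴ := by
      rw [key1]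
      ext j l
      simp only [Matrix.of_apply]
      calc ∑ i, ρ (i, j) (i, l)
          = ∑ i, ∑ ab : A × B, (p ab : ℂ) *
              ((α ab.1 i * star (α ab.1 i)) * (β ab.2 j * star (β ab.2 l))) := by
            refine Finset.sum_congr rfl fun i _ => ?_
            rw [hρeq]
            simp only [Matrix.sum_apply, Matrix.smul_apply, Matrix.kroneckerMap_apply,
              Matrix.of_apply, smul_eq_mul]
        _ = ∑ ab : A × B, (p ab : ℂ) * (β ab.2 j * star (β ab.2 l)) := by
            rw [Finset.sum_comm]
            refine Finset.sum_congr rfl fun ab _ => ?_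
            have : ∑ i, (p ab : ℂ) * ((α ab.1 i * star (α ab.1 i)) *
                (β ab.2 j * star (β ab.2 l))) =
                (p ab : ℂ) * (β ab.2 j * star (β ab.2 l)) * ∑ i, α ab.1 i * star (α ab.1 i) := by
              rw [Finset.mul_sum]
              exact Finset.sum_congr rfl fun i _ => by ring
            rw [this, hα1 ab.1, mul_one]
        _ = ∑ b : B, (∑ a, (p (a, b) : ℂ)) * (β b j * star (β b l)) := by
            rw [Fintype.sum_prod_type_right]
            refine Finset.sum_congr rfl fun b _ => ?_
            rw [Finset.sum_mul]
        _ = ∑ b : B, (∑ a, (p (a, b) : ℂ)) * (UB j b * star (UB l b)) := rfl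
    refine ⟨UA, UB, hUAmem, hUBmem, ?_, ?_, ?_⟩
    · rw [hρA, sandwich UA _ hA2]
      exact Matrix.isDiag_diagonal _
    · rw [hρB, sandwich UB _ hB2]
      exact Matrix.isDiag_diagonal _
    · rw [hρd, sandwich _ _ hU2]
      exact coh_diagonal _
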